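/- Interpolation estimate for the discrete Laplacian: for every periodic grid function φ and every ε > 0, ‖Δ_hφ‖₂² ≤ (1/(3ε²))·‖φ‖₂² + (2ε/3)·‖∇_h(Δ_hφ)‖₂². -/

import Mathlib

open Finset

noncomputable section

/-- Periodic grid functions on an `m × n` grid (indices taken modulo `m` and `n`). -/
abbrev Grid (m n : ℕ) := ZMod m × ZMod n → ℝ

/-- Forward difference in the `x` direction. -/
def Dx {m n : ℕ} (h : ℝ) (φ : Grid m n) : Grid m n :=
  fun p => (φ (p.1 + 1, p.2) - φ p) / h

/-- Forward difference in the `y` direction. -/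
def Dy {m n : ℕ} (h : ℝ) (φ : Grid m n) : Grid m n :=
  fun p => (φ (p.1, p.2 + 1) - φ p) / h

/-- The five-point discrete Laplacian. -/
def lapH {m n : ℕ} (h : ℝ) (φ : Grid m n) : Grid m n :=
  fun p => (φ (p.1 + 1, p.2) + φ (p.1 - 1, p.2) + φ (p.1, p.2 + 1) + φ (p.1, p.2 - 1)
    - 4 * φ p) / h ^ 2

/-- Discrete `L²` norm. -/
def norm2 {m n : ℕ} [NeZero m] [NeZero n] (h : ℝ) (φ : Grid m n) : ℝ :=
  Real.sqrt (h ^ 2 * ∑ p : ZMod m × ZMod n, φ p ^ 2)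

/-- Discrete `L²` norm of the gradient. -/
def gradNorm2 {m n : ℕ} [NeZero m] [NeZero n] (h : ℝ) (φ : Grid m n) : ℝ :=
  Real.sqrt (h ^ 2 * ∑ p : ZMod m × ZMod n, (Dx h φ p ^ 2 + Dy h φ p ^ 2))

section aux
variable {m n : ℕ} [NeZero m] [NeZero n]

lemma shift_sum (c : ZMod m × ZMod n) (F : ZMod m × ZMod n → ℝ) :
    ∑ p : ZMod m × ZMod n, F (p + c) = ∑ p : ZMod m × ZMod n, F p :=
  Equiv.sum_comp (Equiv.addRight c) F

lemma key_lapH (h : ℝ) (hh : h ≠ 0) (φ : Grid m n) (p : ZMod m × ZMod n) (g : Grid m n) :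
    lapH h φ p * g p
      = (Dx h φ p * g p - Dx h φ (p - (1, 0)) * g p
        + Dy h φ p * g p - Dy h φ (p - (0, 1)) * g p) / h := by
  obtain ⟨i, j⟩ := p
  simp only [lapH, Dx, Dy, Prod.mk_sub_mk, sub_zero, sub_add_cancel]
  field_simp
  ring

lemma sbp (h : ℝ) (hh : h ≠ 0) (φ g : Grid m n) :
    ∑ p : ZMod m × ZMod n, lapH h φ p * g p
      = -∑ p : ZMod m × ZMod n, (Dx h φ p * Dx h g p + Dy h φ p * Dy h g p) := by
  have hx : ∀ p : ZMod m × ZMod n, p + ((1 : ZMod m), (0 : ZMod n)) = (p.1 + 1, p.2) := by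
    intro p; ext <;> simp
  have hy : ∀ p : ZMod m × ZMod n, p + ((0 : ZMod m), (1 : ZMod n)) = (p.1, p.2 + 1) := by
    intro p; ext <;> simp
  have h1 : ∑ p : ZMod m × ZMod n, Dx h φ (p - (1, 0)) * g p
      = ∑ p : ZMod m × ZMod n, Dx h φ p * g (p.1 + 1, p.2) := by
    rw [← shift_sum (1, 0) (fun q => Dx h φ (q - (1, 0)) * g q)]
    refine Finset.sum_congr rfl fun p _ => ?_
    rw [add_sub_cancel_right, hx p]
  have h2 : ∑ p : ZMod m × ZMod n, Dy h φ (p - (0, 1)) * g p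
      = ∑ p : ZMod m × ZMod n, Dy h φ p * g (p.1, p.2 + 1) := by
    rw [← shift_sum (0, 1) (fun q => Dy h φ (q - (0, 1)) * g q)]
    refine Finset.sum_congr rfl fun p _ => ?_
    rw [add_sub_cancel_right, hy p]
  calc ∑ p : ZMod m × ZMod n, lapH h φ p * g p
      = ∑ p : ZMod m × ZMod n, (Dx h φ p * g p - Dx h φ (p - (1, 0)) * g p
          + Dy h φ p * g p - Dy h φ (p - (0, 1)) * g p) / h :=
        Finset.sum_congr rfl fun p _ => key_lapH h hh φ p g
    _ = ((∑ p : ZMod m × ZMod n, Dx h φ p * g p)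
          - (∑ p : ZMod m × ZMod n, Dx h φ (p - (1, 0)) * g p)
          + (∑ p : ZMod m × ZMod n, Dy h φ p * g p)
          - (∑ p : ZMod m × ZMod n, Dy h φ (p - (0, 1)) * g p)) / h := by
        rw [← Finset.sum_div]
        congr 1
        rw [Finset.sum_sub_distrib, Finset.sum_add_distrib, Finset.sum_sub_distrib]
    _ = -∑ p : ZMod m × ZMod n, (Dx h φ p * Dx h g p + Dy h φ p * Dy h g p) := by
        rw [h1, h2]
        have e : ∀ p : ZMod m × ZMod n,
            Dx h φ p * Dx h g p + Dy h φ p * Dy h g p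
              = (Dx h φ p * g (p.1 + 1, p.2) - Dx h φ p * g p
                 + Dy h φ p * g (p.1, p.2 + 1) - Dy h φ p * g p) / h := by
          intro p; simp only [Dx, Dy]; field_simp; ring
        rw [Finset.sum_congr rfl fun p _ => e p, ← Finset.sum_div,
            Finset.sum_sub_distrib, Finset.sum_add_distrib, Finset.sum_sub_distrib]
        ring

lemma cs_pair (a b c d : ZMod m × ZMod n → ℝ) :
    (∑ p : ZMod m × ZMod n, (a p * c p + b p * d p)) ^ 2
      ≤ (∑ p : ZMod m × ZMod n, (a p ^ 2 + b p ^ 2))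
        * ∑ p : ZMod m × ZMod n, (c p ^ 2 + d p ^ 2) := by
  have key := Finset.sum_mul_sq_le_sq_mul_sq (univ : Finset (Bool × (ZMod m × ZMod n)))
    (fun x => bif x.1 then a x.2 else b x.2) (fun x => bif x.1 then c x.2 else d x.2)
  simpa [Fintype.sum_prod_type, Finset.sum_add_distrib, add_comm] using key

end aux

/-- Interpolation estimate for the discrete Laplacian:
`‖Δₕφ‖₂² ≤ (1/(3ε²)) ‖φ‖₂² + (2ε/3) ‖∇ₕ(Δₕφ)‖₂²` for every `ε > 0`. -/
theorem discrete_laplacian_interpolation (m n : ℕ) [NeZero m] [NeZero n]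
    (h : ℝ) (hh : 0 < h) (φ : Grid m n) (ε : ℝ) (hε : 0 < ε) :
    norm2 h (lapH h φ) ^ 2
      ≤ 1 / (3 * ε ^ 2) * norm2 h φ ^ 2 + 2 * ε / 3 * gradNorm2 h (lapH h φ) ^ 2 := by
  have hh' : h ≠ 0 := ne_of_gt hh
  set ψ : Grid m n := lapH h φ with hψ
  set S : ℝ := ∑ p : ZMod m × ZMod n, ψ p ^ 2 with hSdef
  set A : ℝ := ∑ p : ZMod m × ZMod n, φ p ^ 2 with hAdef
  set G : ℝ := ∑ p : ZMod m × ZMod n, (Dx h ψ p ^ 2 + Dy h ψ p ^ 2) with hGdef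
  set B : ℝ := ∑ p : ZMod m × ZMod n, (Dx h φ p ^ 2 + Dy h φ p ^ 2) with hBdef
  have hS0 : 0 ≤ S := Finset.sum_nonneg fun p _ => sq_nonneg _
  have hA0 : 0 ≤ A := Finset.sum_nonneg fun p _ => sq_nonneg _
  have hG0 : 0 ≤ G := Finset.sum_nonneg fun p _ =>
    add_nonneg (sq_nonneg _) (sq_nonneg _)
  have hB0 : 0 ≤ B := Finset.sum_nonneg fun p _ =>
    add_nonneg (sq_nonneg _) (sq_nonneg _)
  -- S = -∑ (∇φ · ∇ψ)
  have e1 : S = -∑ p : ZMod m × ZMod n, (Dx h φ p * Dx h ψ p + Dy h φ p * Dy h ψ p) := by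
    have key := sbp h hh' φ ψ
    rw [← hψ] at key
    rw [hSdef, ← key]
    exact Finset.sum_congr rfl fun p _ => pow_two _
  -- B = -∑ ψ φ
  have e2 : B = -∑ p : ZMod m × ZMod n, ψ p * φ p := by
    have key := sbp h hh' φ φ
    rw [← hψ] at key
    rw [hBdef, key, neg_neg]
    exact Finset.sum_congr rfl fun p _ => by ring
  -- Cauchy–Schwarz twice
  have c1 : S ^ 2 ≤ B * G := by
    rw [e1, neg_pow]
    simpa using cs_pair (Dx h φ) (Dy h φ) (Dx h ψ) (Dy h ψ)
  have c2 : B ^ 2 ≤ S * A := by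
    rw [e2, neg_pow]
    have := Finset.sum_mul_sq_le_sq_mul_sq (univ : Finset (ZMod m × ZMod n)) ψ φ
    simpa using this
  -- S³ ≤ A G²
  have hS3 : S ^ 3 ≤ A * G ^ 2 := by
    rcases eq_or_lt_of_le hS0 with hS | hS
    · rw [← hS]
      norm_num
      positivity
    · have h4 : S ^ 4 ≤ S * (A * G ^ 2) := by
        calc S ^ 4 = (S ^ 2) ^ 2 := by ring
          _ ≤ (B * G) ^ 2 := by
              apply pow_le_pow_left₀ (sq_nonneg S) c1
          _ = B ^ 2 * G ^ 2 := by ring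
          _ ≤ S * A * G ^ 2 := mul_le_mul_of_nonneg_right c2 (sq_nonneg G)
          _ = S * (A * G ^ 2) := by ring
      have := le_of_mul_le_mul_left (by linarith [h4] : S * S ^ 3 ≤ S * (A * G ^ 2)) hS
      exact this
  -- weighted AM-GM: 3 ε² S ≤ A + 2 ε³ G
  have hfin : 3 * ε ^ 2 * S ≤ A + 2 * ε ^ 3 * G := by
    have hb0 : 0 ≤ ε ^ 3 * G := by positivity
    refine le_of_pow_le_pow_left₀ (n := 3) (by norm_num) (by positivity) ?_
    have amgm : 27 * A * (ε ^ 3 * G) ^ 2 ≤ (A + 2 * (ε ^ 3 * G)) ^ 3 := by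
      nlinarith [sq_nonneg (A - ε ^ 3 * G), hA0, hb0]
    calc (3 * ε ^ 2 * S) ^ 3 = 27 * ε ^ 6 * S ^ 3 := by ring
      _ ≤ 27 * ε ^ 6 * (A * G ^ 2) := by
          apply mul_le_mul_of_nonneg_left hS3 (by positivity)
      _ = 27 * A * (ε ^ 3 * G) ^ 2 := by ring
      _ ≤ (A + 2 * (ε ^ 3 * G)) ^ 3 := amgm
      _ = (A + 2 * ε ^ 3 * G) ^ 3 := by ring
  -- unfold the norms
  have n1 : norm2 h ψ ^ 2 = h ^ 2 * S := Real.sq_sqrt (by positivity)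
  have n2 : norm2 h φ ^ 2 = h ^ 2 * A := Real.sq_sqrt (by positivity)
  have n3 : gradNorm2 h ψ ^ 2 = h ^ 2 * G := Real.sq_sqrt (by positivity)
  rw [n1, n2, n3]
  have e : 1 / (3 * ε ^ 2) * (h ^ 2 * A) + 2 * ε / 3 * (h ^ 2 * G)
      = (h ^ 2 * A + 2 * ε ^ 3 * (h ^ 2 * G)) / (3 * ε ^ 2) := by
    field_simp
  rw [e, le_div_iff₀ (by positivity)]
  nlinarith [mul_le_mul_of_nonneg_left hfin (sq_nonneg h)]
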